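/- Let c and k be positive integers with k - 2 ≥ log₂(c+1) (equivalently 2^{k-2} ≥ c+1), and let G be a finitely generated nilpotent group of nilpotency class at most c. Set K = G^{2^k}. Then for every normal subgroup N of G one has [N, K] ≤ N⁴. In particular K is powerful, i.e. [K,K] ≤ K⁴. -/

import Mathlib

/-- `subPow N m` is the subgroup generated by the `m`-th powers of elements of `N`. -/
def subPow {G : Type*} [Group G] (N : Subgroup G) (m : ℕ) : Subgroup G :=
  Subgroup.closure {x : G | ∃ n ∈ N, n ^ m = x}

open scoped commutatorElement

namespace PowerfulAux

open Subgroup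

variable {H : Type*} [Group H]

/-! ### Elementary commutator identities -/

theorem id_sq (a y : H) : ⁅a, y * y⁆ = ⁅a, y⁆ * ⁅a, y⁆ * ⁅⁅a, y⁆⁻¹, y⁆ := by
  simp only [commutatorElement_def]; group

theorem id_gensq (e v : H) : ⁅e * e, v⁆ = ⁅⁅e, v⁆, e⁆⁻¹ * ⁅e, v⁆ * ⁅e, v⁆ := by
  have h : e * e = e ^ (2:ℤ) := by rw [zpow_two]
  rw [h]; simp only [commutatorElement_def]; group

theorem id_mul_left (a b c : H) : ⁅a * b, c⁆ = a * ⁅b, c⁆ * a⁻¹ * ⁅a, c⁆ := by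
  simp only [commutatorElement_def]; group

theorem id_inv_left (a c : H) : ⁅a⁻¹, c⁆ = a⁻¹ * ⁅a, c⁆⁻¹ * a := by
  simp only [commutatorElement_def]; group

theorem id_mul_right (c a b : H) : ⁅c, a * b⁆ = ⁅c, a⁆ * (a * ⁅c, b⁆ * a⁻¹) := by
  simp only [commutatorElement_def]; group

theorem id_inv_right (c a : H) : ⁅c, a⁻¹⁆ = a⁻¹ * ⁅c, a⁆⁻¹ * a := by
  simp only [commutatorElement_def]; group

theorem id_sq_mul (u v : H) : (u * v) ^ 2 = u ^ 2 * v ^ 2 * (v⁻¹ * ⁅v⁻¹, u⁻¹⁆ * v) := by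
  simp only [commutatorElement_def, pow_two]; group

theorem comm_one_left (v : H) : ⁅(1 : H), v⁆ = 1 := by
  simp [commutatorElement_def]

theorem comm_one_right (v : H) : ⁅v, (1 : H)⁆ = 1 := by
  simp [commutatorElement_def]

/-! ### Basic facts about `subPow` -/

theorem closure_normal_of_conj {S : Set H} (h : ∀ g x, x ∈ S → g * x * g⁻¹ ∈ S) :
    (closure S).Normal := by
  constructor
  intro n hn g
  induction hn using closure_induction with
  | mem x hx => exact subset_closure (h g x hx)
  | one => simpa using (closure S).one_mem
  | mul x y hx hy px py =>
      have hxy : g * (x * y) * g⁻¹ = (g * x * g⁻¹) * (g * y * g⁻¹) := by group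
      rw [hxy]; exact mul_mem px py
  | inv x hx px =>
      have hxi : g * x⁻¹ * g⁻¹ = (g * x * g⁻¹)⁻¹ := by group
      rw [hxi]; exact inv_mem px

theorem mem_subPow {N : Subgroup H} {m : ℕ} {g : H} (hg : g ∈ N) : g ^ m ∈ subPow N m :=
  subset_closure ⟨g, hg, rfl⟩

theorem subPow_le (N : Subgroup H) (m : ℕ) : subPow N m ≤ N :=
  (closure_le _).mpr (by rintro x ⟨n, hn, rfl⟩; exact N.pow_mem hn m)

theorem subPow_mono {N N' : Subgroup H} (h : N ≤ N') (m : ℕ) : subPow N m ≤ subPow N' m :=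
  closure_mono (by rintro x ⟨n, hn, rfl⟩; exact ⟨n, h hn, rfl⟩)

theorem subPow_normal (N : Subgroup H) [hN : N.Normal] (m : ℕ) : (subPow N m).Normal := by
  apply closure_normal_of_conj
  rintro g x ⟨n, hn, rfl⟩
  exact ⟨g * n * g⁻¹, hN.conj_mem n hn g, by rw [conj_pow]⟩

theorem subPow_map {G' : Type*} [Group G'] (f : H →* G') (N : Subgroup H) (m : ℕ) :
    (subPow N m).map f = subPow (N.map f) m := by
  unfold subPow
  rw [MonoidHom.map_closure]
  congr 1
  ext y
  constructor
  · rintro ⟨x, ⟨n, hn, rfl⟩, rfl⟩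
    exact ⟨f n, ⟨n, hn, rfl⟩, (map_pow f n m).symm⟩
  · rintro ⟨b, ⟨n, hn, rfl⟩, rfl⟩
    exact ⟨n ^ m, ⟨n, hn, rfl⟩, map_pow f n m⟩

/-! ### Three subgroups lemma, relative version -/

theorem three_subgroups {A B C K : Subgroup H} [K.Normal]
    (h1 : ⁅⁅B, C⁆, A⁆ ≤ K) (h2 : ⁅⁅C, A⁆, B⁆ ≤ K) : ⁅⁅A, B⁆, C⁆ ≤ K := by
  have key : ∀ X Y Z : Subgroup H,
      ⁅⁅X, Y⁆, Z⁆ ≤ K ↔ ⁅⁅(X.map (QuotientGroup.mk' K)), (Y.map (QuotientGroup.mk' K))⁆,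
        Z.map (QuotientGroup.mk' K)⁆ = ⊥ := by
    intro X Y Z
    rw [← map_commutator, ← map_commutator, Subgroup.map_eq_bot_iff, QuotientGroup.ker_mk']
  rw [key]
  exact commutator_commutator_eq_bot_of_rotate ((key B C A).mp h1) ((key C A B).mp h2)

/-! ### The descending chain `D N i = [N, G, G, ..., G]` -/

def D (N : Subgroup H) : ℕ → Subgroup H
  | 0 => N
  | i + 1 => ⁅D N i, ⊤⁆

theorem D_succ (N : Subgroup H) (i : ℕ) : D N (i + 1) = ⁅D N i, ⊤⁆ := rfl

theorem D_normal (N : Subgroup H) [hN : N.Normal] : ∀ i, (D N i).Normal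
  | 0 => hN
  | i + 1 => by
      haveI := D_normal N i
      exact Subgroup.commutator_normal _ _

theorem D_succ_le (N : Subgroup H) [N.Normal] (i : ℕ) : D N (i + 1) ≤ D N i := by
  haveI := D_normal N i
  exact commutator_le_left _ _

theorem D_le_D (N : Subgroup H) [N.Normal] {a b : ℕ} (h : a ≤ b) : D N b ≤ D N a :=
  antitone_nat_of_succ_le (D_succ_le N) h

theorem D_le_N (N : Subgroup H) [N.Normal] (i : ℕ) : D N i ≤ N := D_le_D N (Nat.zero_le i)

theorem D_le_lcs (N : Subgroup H) (i : ℕ) : D N i ≤ (⊤ : Subgroup H).lowerCentralSeries i := by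
  induction i with
  | zero => exact le_top
  | succ i ih =>
      rw [Subgroup.lowerCentralSeries_succ]
      exact Subgroup.commutator_mono ih le_top

theorem D_grade (N : Subgroup H) [N.Normal] : ∀ b a, ⁅D N a, D N b⁆ ≤ D N (a + b + 1)
  | 0, a => by
      have : ⁅D N a, D N 0⁆ ≤ ⁅D N a, ⊤⁆ := Subgroup.commutator_mono le_rfl le_top
      simpa [D_succ] using this
  | b + 1, a => by
      haveI := D_normal N (a + (b + 1) + 1)
      rw [D_succ]
      have h1 : ⁅⁅(⊤ : Subgroup H), D N a⁆, D N b⁆ ≤ D N (a + (b + 1) + 1) := by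
        rw [Subgroup.commutator_comm ⊤ (D N a), ← D_succ]
        have := D_grade N b (a + 1)
        have e : a + 1 + b + 1 = a + (b + 1) + 1 := by omega
        rwa [e] at this
      have h2 : ⁅⁅D N a, D N b⁆, (⊤ : Subgroup H)⁆ ≤ D N (a + (b + 1) + 1) := by
        calc ⁅⁅D N a, D N b⁆, (⊤ : Subgroup H)⁆
            ≤ ⁅D N (a + b + 1), (⊤ : Subgroup H)⁆ :=
              Subgroup.commutator_mono (D_grade N b a) le_rfl
          _ = D N (a + b + 1 + 1) := (D_succ N _).symm
          _ ≤ D N (a + (b + 1) + 1) := by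
              have e : a + b + 1 + 1 = a + (b + 1) + 1 := by omega
              rw [e]
      have := three_subgroups (A := D N b) (B := (⊤ : Subgroup H)) (C := D N a)
        (K := D N (a + (b + 1) + 1)) h1 h2
      rw [Subgroup.commutator_comm (D N a)]
      exact this

variable {N : Subgroup H} [N.Normal]

def sqS (N : Subgroup H) (m : ℕ) : Set H := {x : H | ∃ n ∈ D N m, n ^ 2 = x}

theorem Phi_eq (m j : ℕ) :
    subPow (D N m) 2 ⊔ D N j = closure (sqS N m ∪ (D N j : Set H)) := by
  rw [Subgroup.closure_union, Subgroup.closure_eq]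
  rfl

theorem Phi_normal (m j : ℕ) : (subPow (D N m) 2 ⊔ D N j).Normal := by
  haveI := D_normal N m; haveI := D_normal N j
  haveI := subPow_normal (D N m) 2
  exact Subgroup.sup_normal _ _

theorem Phi3_normal (m j₁ j₂ : ℕ) : (subPow (D N m) 2 ⊔ (D N j₁ ⊔ D N j₂)).Normal := by
  haveI := D_normal N m; haveI := D_normal N j₁; haveI := D_normal N j₂
  haveI := subPow_normal (D N m) 2
  haveI : (D N j₁ ⊔ D N j₂).Normal := Subgroup.sup_normal _ _
  exact Subgroup.sup_normal _ _

theorem absorb {m₁ j₁ m j : ℕ} (hm : m ≤ m₁) (hj : j ≤ j₁) :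
    subPow (D N m₁) 2 ⊔ D N j₁ ≤ subPow (D N m) 2 ⊔ D N j :=
  sup_le ((subPow_mono (D_le_D N hm) 2).trans le_sup_left)
    ((D_le_D N hj).trans le_sup_right)

theorem absorb3 {m₁ j₁ j₂ m j : ℕ} (hm : m ≤ m₁) (h1 : j ≤ j₁) (h2 : j ≤ j₂) :
    subPow (D N m₁) 2 ⊔ (D N j₁ ⊔ D N j₂) ≤ subPow (D N m) 2 ⊔ D N j :=
  sup_le ((subPow_mono (D_le_D N hm) 2).trans le_sup_left)
    (sup_le ((D_le_D N h1).trans le_sup_right) ((D_le_D N h2).trans le_sup_right))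

theorem memD_comm {a b : ℕ} {x y : H} (hx : x ∈ D N a) (hy : y ∈ D N b) :
    ⁅x, y⁆ ∈ D N (a + b + 1) :=
  D_grade N b a (Subgroup.commutator_mem_commutator hx hy)

theorem memD_comm_top {a : ℕ} {x : H} (y : H) (hx : x ∈ D N a) : ⁅x, y⁆ ∈ D N (a + 1) := by
  rw [D_succ]
  exact Subgroup.commutator_mem_commutator hx (Subgroup.mem_top y)

/-- Lemma A : `[N_a², D_b] ⊆ N_{a+b+1}² · N_{2a+b+2}`. -/
theorem lemA {a b : ℕ} {u v : H} (hu : u ∈ subPow (D N a) 2) (hv : v ∈ D N b) :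
    ⁅u, v⁆ ∈ subPow (D N (a + b + 1)) 2 ⊔ D N (2*a + b + 2) := by
  have hT := Phi_normal (N := N) (a + b + 1) (2*a + b + 2)
  have hu' : u ∈ closure (sqS N a) := hu
  clear hu
  induction hu' using closure_induction with
  | mem x hx =>
      obtain ⟨e, he, rfl⟩ := hx
      have hw : ⁅e, v⁆ ∈ D N (a + b + 1) := memD_comm he hv
      have h1 : ⁅⁅e, v⁆, e⁆ ∈ D N (2*a + b + 2) := by
        have h := memD_comm hw he
        have e2 : a + b + 1 + a + 1 = 2*a + b + 2 := by omega
        rwa [e2] at h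
      rw [pow_two, id_gensq, mul_assoc, ← pow_two]
      exact mul_mem (mem_sup_right (inv_mem h1)) (mem_sup_left (mem_subPow hw))
  | one => rw [comm_one_left]; exact one_mem _
  | mul x y hx hy px py =>
      rw [id_mul_left]
      exact mul_mem (hT.conj_mem _ py x) px
  | inv x hx px =>
      rw [id_inv_left]
      have := hT.conj_mem _ (inv_mem px) x⁻¹
      rwa [inv_inv] at this

/-- Lemma A' : version of A with a junk factor. -/
theorem lemA' {m j b : ℕ} {u v : H} (hu : u ∈ subPow (D N m) 2 ⊔ D N j) (hv : v ∈ D N b) :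
    ⁅u, v⁆ ∈ subPow (D N (m + b + 1)) 2 ⊔ (D N (2*m + b + 2) ⊔ D N (j + b + 1)) := by
  have hT := Phi3_normal (N := N) (m + b + 1) (2*m + b + 2) (j + b + 1)
  rw [Phi_eq] at hu
  induction hu using closure_induction with
  | mem x hx =>
      rcases hx with hx | hx
      · obtain ⟨e, he, rfl⟩ := hx
        have h := lemA (mem_subPow he) hv
        have hemb : subPow (D N (m + b + 1)) 2 ⊔ D N (2*m + b + 2) ≤
            subPow (D N (m + b + 1)) 2 ⊔ (D N (2*m + b + 2) ⊔ D N (j + b + 1)) :=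
          sup_le le_sup_left (le_sup_of_le_right le_sup_left)
        exact hemb h
      · exact mem_sup_right (mem_sup_right (memD_comm hx hv))
  | one => rw [comm_one_left]; exact one_mem _
  | mul x y hx hy px py =>
      rw [id_mul_left]
      exact mul_mem (hT.conj_mem _ py x) px
  | inv x hx px =>
      rw [id_inv_left]
      have := hT.conj_mem _ (inv_mem px) x⁻¹
      rwa [inv_inv] at this

/-- commutator of a square-part with a `Phi`-element. -/
theorem lemBC₁ {m j : ℕ} (hmj : j ≤ 2*m + 1)
    (hB : ∀ u ∈ subPow (D N m) 2, ∀ v ∈ subPow (D N m) 2,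
      ⁅u, v⁆ ∈ subPow (D N (m + m + 2)) 2 ⊔ D N (2*m + 2*m + 3))
    {u v : H} (hu : u ∈ subPow (D N m) 2) (hv : v ∈ subPow (D N m) 2 ⊔ D N j) :
    ⁅u, v⁆ ∈ subPow (D N j) 2 ⊔ D N (2*j + 1) := by
  have hT := Phi_normal (N := N) j (2*j + 1)
  rw [Phi_eq] at hv
  induction hv using closure_induction with
  | mem y hy =>
      rcases hy with hy | hy
      · obtain ⟨f, hf, rfl⟩ := hy
        exact absorb (by omega) (by omega) (hB u hu _ (mem_subPow hf))
      · exact absorb (by omega) (by omega) (lemA hu hy)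
  | one => rw [comm_one_right]; exact one_mem _
  | mul y z hy hz py pz =>
      rw [id_mul_right]
      exact mul_mem py (hT.conj_mem _ pz y)
  | inv y hy py =>
      rw [id_inv_right]
      have := hT.conj_mem _ (inv_mem py) y⁻¹
      rwa [inv_inv] at this

/-- commutator of a junk-part with a `Phi`-element. -/
theorem lemBC₂ {m j : ℕ} (hmj : j ≤ 2*m + 1)
    {u v : H} (hu : u ∈ D N j) (hv : v ∈ subPow (D N m) 2 ⊔ D N j) :
    ⁅u, v⁆ ∈ subPow (D N j) 2 ⊔ D N (2*j + 1) := by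
  have hT := Phi_normal (N := N) j (2*j + 1)
  rw [Phi_eq] at hv
  induction hv using closure_induction with
  | mem y hy =>
      rcases hy with hy | hy
      · obtain ⟨f, hf, rfl⟩ := hy
        rw [← commutatorElement_inv]
        exact inv_mem (absorb (by omega) (by omega) (lemA (mem_subPow hf) hu))
      · have h := memD_comm hu hy
        have e2 : j + j + 1 = 2*j + 1 := by omega
        rw [e2] at h
        exact mem_sup_right h
  | one => rw [comm_one_right]; exact one_mem _
  | mul y z hy hz py pz =>
      rw [id_mul_right]
      exact mul_mem py (hT.conj_mem _ pz y)
  | inv y hy py =>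
      rw [id_inv_right]
      have := hT.conj_mem _ (inv_mem py) y⁻¹
      rwa [inv_inv] at this

/-- commutators of two `Phi`-elements. -/
theorem lemBC {m j : ℕ} (hmj : j ≤ 2*m + 1)
    (hB : ∀ u ∈ subPow (D N m) 2, ∀ v ∈ subPow (D N m) 2,
      ⁅u, v⁆ ∈ subPow (D N (m + m + 2)) 2 ⊔ D N (2*m + 2*m + 3))
    {u v : H} (hu : u ∈ subPow (D N m) 2 ⊔ D N j) (hv : v ∈ subPow (D N m) 2 ⊔ D N j) :
    ⁅u, v⁆ ∈ subPow (D N j) 2 ⊔ D N (2*j + 1) := by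
  have hT := Phi_normal (N := N) j (2*j + 1)
  rw [Phi_eq] at hu
  induction hu using closure_induction with
  | mem x hx =>
      rcases hx with hx | hx
      · obtain ⟨e, he, rfl⟩ := hx
        exact lemBC₁ hmj hB (mem_subPow he) hv
      · exact lemBC₂ hmj hx hv
  | one => rw [comm_one_left]; exact one_mem _
  | mul x y hx hy px py =>
      rw [id_mul_left]
      exact mul_mem (hT.conj_mem _ py x) px
  | inv x hx px =>
      rw [id_inv_left]
      have := hT.conj_mem _ (inv_mem px) x⁻¹
      rwa [inv_inv] at this

/-- squaring map on `Phi m j`. -/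
theorem lemC (hexp : ∀ g ∈ N, g ^ 4 = 1) {m j : ℕ} (hmj : j ≤ 2*m + 1)
    (hB : ∀ u ∈ subPow (D N m) 2, ∀ v ∈ subPow (D N m) 2,
      ⁅u, v⁆ ∈ subPow (D N (m + m + 2)) 2 ⊔ D N (2*m + 2*m + 3))
    {w : H} (hw : w ∈ subPow (D N m) 2 ⊔ D N j) :
    w ^ 2 ∈ subPow (D N j) 2 ⊔ D N (2*j + 1) := by
  have hT := Phi_normal (N := N) j (2*j + 1)
  rw [Phi_eq] at hw
  induction hw using closure_induction with
  | mem x hx =>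
      rcases hx with hx | hx
      · obtain ⟨e, he, rfl⟩ := hx
        have h4 : (e ^ 2) ^ 2 = 1 := by
          rw [← pow_mul]
          have : e ^ 4 = 1 := hexp e (D_le_N N m he)
          simpa using this
        rw [h4]; exact one_mem _
      · exact mem_sup_left (mem_subPow hx)
  | one => rw [one_pow]; exact one_mem _
  | mul x y hx hy px py =>
      have hx' : x ∈ subPow (D N m) 2 ⊔ D N j := by rw [Phi_eq]; exact hx
      have hy' : y ∈ subPow (D N m) 2 ⊔ D N j := by rw [Phi_eq]; exact hy
      rw [id_sq_mul]
      refine mul_mem (mul_mem px py) ?_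
      have hc : ⁅y⁻¹, x⁻¹⁆ ∈ subPow (D N j) 2 ⊔ D N (2*j + 1) :=
        lemBC hmj hB (inv_mem hy') (inv_mem hx')
      have := hT.conj_mem _ hc y⁻¹
      rwa [inv_inv] at this
  | inv x hx px =>
      rw [inv_pow]
      exact inv_mem px





variable (N) in
/-- Lemma B, established by downward induction on total depth. -/
theorem lemB_aux {c : ℕ} (hexp : ∀ g ∈ N, g ^ 4 = 1) (hDc : D N c = ⊥) :
    ∀ s a b : ℕ, 2*c ≤ a + b + s → ∀ u ∈ subPow (D N a) 2, ∀ v ∈ subPow (D N b) 2,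
      ⁅u, v⁆ ∈ subPow (D N (a + b + 2)) 2 ⊔ D N (2*a + 2*b + 3) := by
  intro s
  induction s with
  | zero =>
      intro a b h u hu v hv
      rcases (by omega : c ≤ a ∨ c ≤ b) with hca | hcb
      · have hu1 : u = 1 := by
          have : u ∈ (⊥ : Subgroup H) := by
            rw [← hDc]
            exact ((subPow_le _ _).trans (D_le_D N hca)) hu
          simpa [Subgroup.mem_bot] using this
        rw [hu1, comm_one_left]; exact one_mem _
      · have hv1 : v = 1 := by
          have : v ∈ (⊥ : Subgroup H) := by
            rw [← hDc]
            exact ((subPow_le _ _).trans (D_le_D N hcb)) hv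
          simpa [Subgroup.mem_bot] using this
        rw [hv1, comm_one_right]; exact one_mem _
  | succ s ih =>
      intro a b h u hu v hv
      have hT := Phi_normal (N := N) (a + b + 2) (2*a + 2*b + 3)
      have hu' : u ∈ closure (sqS N a) := hu
      clear hu
      induction hu' using closure_induction with
      | mem x hx =>
          obtain ⟨e, he, rfl⟩ := hx
          have hwmem : ⁅e, v⁆ ∈ subPow (D N (b + a + 1)) 2 ⊔ D N (2*b + a + 2) := by
            rw [← commutatorElement_inv]
            exact inv_mem (lemA hv he)
          have hB' : ∀ u' ∈ subPow (D N (b + a + 1)) 2, ∀ v' ∈ subPow (D N (b + a + 1)) 2,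
              ⁅u', v'⁆ ∈ subPow (D N ((b + a + 1) + (b + a + 1) + 2)) 2 ⊔
                D N (2*(b + a + 1) + 2*(b + a + 1) + 3) :=
            fun u' hu' v' hv' => ih (b + a + 1) (b + a + 1) (by omega) u' hu' v' hv'
          have hsq : ⁅e, v⁆ ^ 2 ∈ subPow (D N (2*b + a + 2)) 2 ⊔ D N (2*(2*b + a + 2) + 1) :=
            lemC hexp (by omega) hB' hwmem
          have hcomm : ⁅⁅e, v⁆, e⁆ ∈ subPow (D N ((b + a + 1) + a + 1)) 2 ⊔
              (D N (2*(b + a + 1) + a + 2) ⊔ D N ((2*b + a + 2) + a + 1)) :=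
            lemA' hwmem he
          rw [pow_two, id_gensq, mul_assoc, ← pow_two]
          refine mul_mem (inv_mem (absorb3 (by omega) (by omega) (by omega) hcomm)) ?_
          exact absorb (by omega) (by omega) hsq
      | one => rw [comm_one_left]; exact one_mem _
      | mul x y hx hy px py =>
          rw [id_mul_left]
          exact mul_mem (hT.conj_mem _ py x) px
      | inv x hx px =>
          rw [id_inv_left]
          have := hT.conj_mem _ (inv_mem px) x⁻¹
          rwa [inv_inv] at this

variable (N) in
theorem lemB {c : ℕ} (hexp : ∀ g ∈ N, g ^ 4 = 1) (hDc : D N c = ⊥) (m : ℕ) :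
    ∀ u ∈ subPow (D N m) 2, ∀ v ∈ subPow (D N m) 2,
      ⁅u, v⁆ ∈ subPow (D N (m + m + 2)) 2 ⊔ D N (2*m + 2*m + 3) := by
  have h := lemB_aux N hexp hDc (2*c) m m (by omega)
  intro u hu v hv
  have := h u hu v hv
  have e1 : m + m + 2 = m + m + 2 := rfl
  convert this using 3 <;> omega

variable (N) in
/-- The main claim: `[D_p, x^{2^{t+1}}] ⊆ D_{p+2^t}² · D_{p+2^{t+1}}`. -/
theorem lemM {c : ℕ} (hexp : ∀ g ∈ N, g ^ 4 = 1) (hDc : D N c = ⊥) :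
    ∀ t p : ℕ, ∀ n ∈ D N p, ∀ x : H,
      ⁅n, x ^ 2 ^ (t+1)⁆ ∈ subPow (D N (p + 2^t)) 2 ⊔ D N (p + 2^(t+1)) := by
  intro t
  induction t with
  | zero =>
      intro p n hn x
      have hx2 : x ^ 2 ^ 1 = x * x := by rw [pow_one, pow_two]
      rw [hx2, id_sq, ← pow_two]
      have hb : ⁅n, x⁆ ∈ D N (p + 1) := memD_comm_top x hn
      refine mul_mem ?_ ?_
      · apply mem_sup_left
        have e1 : p + 2^0 = p + 1 := by norm_num
        rw [e1]
        exact mem_subPow hb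
      · apply mem_sup_right
        have h := memD_comm_top x (inv_mem hb)
        have e2 : p + 1 + 1 = p + 2^1 := by norm_num
        rwa [e2] at h
  | succ t ih =>
      intro p n hn x
      have e1 : 2 ^ (t+1) = 2 * 2^t := by rw [pow_succ]; ring
      have e2 : 2 ^ (t+2) = 4 * 2^t := by rw [pow_succ, pow_succ]; ring
      have e3 : 1 ≤ 2^t := Nat.one_le_two_pow
      have hT := Phi_normal (N := N) (p + 2^(t+1)) (p + 2^(t+2))
      have hy : x ^ 2 ^ (t+2) = (x ^ 2 ^ (t+1)) * (x ^ 2 ^ (t+1)) := by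
        rw [← pow_add]
        congr 1
        omega
      -- the key sub-step : commutators of Phi-elements with y
      have key : ∀ w ∈ subPow (D N (p + 2^t)) 2 ⊔ D N (p + 2^(t+1)),
          ⁅w, x ^ 2 ^ (t+1)⁆ ∈ subPow (D N (p + 2^(t+1))) 2 ⊔ D N (p + 2^(t+2)) := by
        intro w hw
        rw [Phi_eq] at hw
        induction hw using closure_induction with
        | mem z hz =>
            rcases hz with hz | hz
            · obtain ⟨e, he, rfl⟩ := hz
              have hw' := ih (p + 2^t) e he x
              have hB2 := lemB N hexp hDc (p + 2^t + 2^t)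
              have hB2' : ∀ u' ∈ subPow (D N (p + 2^t + 2^t)) 2,
                  ∀ v' ∈ subPow (D N (p + 2^t + 2^t)) 2,
                  ⁅u', v'⁆ ∈ subPow (D N ((p + 2^t + 2^t) + (p + 2^t + 2^t) + 2)) 2 ⊔
                    D N (2*(p + 2^t + 2^t) + 2*(p + 2^t + 2^t) + 3) := hB2
              have hsq : ⁅e, x ^ 2 ^ (t+1)⁆ ^ 2 ∈ subPow (D N (p + 2^t + 2^(t+1))) 2 ⊔
                  D N (2*(p + 2^t + 2^(t+1)) + 1) :=
                lemC hexp (by omega) hB2' hw'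
              have hcomm : ⁅⁅e, x ^ 2 ^ (t+1)⁆, e⁆ ∈
                  subPow (D N ((p + 2^t + 2^t) + (p + 2^t) + 1)) 2 ⊔
                  (D N (2*(p + 2^t + 2^t) + (p + 2^t) + 2) ⊔
                    D N ((p + 2^t + 2^(t+1)) + (p + 2^t) + 1)) :=
                lemA' hw' he
              rw [pow_two, id_gensq, mul_assoc, ← pow_two]
              refine mul_mem (inv_mem (absorb3 (by omega) (by omega) (by omega) hcomm)) ?_
              exact absorb (by omega) (by omega) hsq
            · have h := ih (p + 2^(t+1)) z hz x
              exact absorb (by omega) (by omega) h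
        | one => rw [comm_one_left]; exact one_mem _
        | mul z₁ z₂ h₁ h₂ p₁ p₂ =>
            rw [id_mul_left]
            exact mul_mem (hT.conj_mem _ p₂ z₁) p₁
        | inv z h₁ p₁ =>
            rw [id_inv_left]
            have := hT.conj_mem _ (inv_mem p₁) z⁻¹
            rwa [inv_inv] at this
      have hb := ih p n hn x
      rw [hy, id_sq, ← pow_two]
      refine mul_mem ?_ ?_
      · have hB2 := lemB N hexp hDc (p + 2^t)
        have hsq : ⁅n, x ^ 2 ^ (t+1)⁆ ^ 2 ∈ subPow (D N (p + 2^(t+1))) 2 ⊔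
            D N (2*(p + 2^(t+1)) + 1) := lemC hexp (by omega) hB2 hb
        exact absorb (by omega) (by omega) hsq
      · exact key _ (inv_mem hb)



theorem lcs_succ_comm {Q : Type*} [Group Q] (i : ℕ) :
    (⊤ : Subgroup Q).lowerCentralSeries (i + 1) = ⁅(⊤ : Subgroup Q).lowerCentralSeries i, ⊤⁆ := by
  rw [Subgroup.lowerCentralSeries_succ]

/-- The key consequence: in a nilpotent group of class `≤ c`, if a normal subgroup `N`
satisfies `g⁴ = 1` for all of its elements, then `2^k`-th powers commute with `N`. -/
theorem star {Q : Type*} [Group Q] {c k : ℕ} (N : Subgroup Q) [N.Normal]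
    (hexp : ∀ g ∈ N, g ^ 4 = 1) (hlcs : (⊤ : Subgroup Q).lowerCentralSeries c = ⊥)
    (hk : 1 ≤ k) (hck : c ≤ 2 ^ (k - 1)) :
    ∀ n ∈ N, ∀ x : Q, ⁅n, x ^ 2 ^ k⁆ = 1 := by
  intro n hn x
  have hDc : D N c = ⊥ := le_bot_iff.mp ((D_le_lcs N c).trans hlcs.le)
  have h := lemM N hexp hDc (k - 1) 0 n hn x
  have ek : k - 1 + 1 = k := by omega
  rw [ek] at h
  have h1 : subPow (D N (0 + 2 ^ (k - 1))) 2 ≤ ⊥ := by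
    calc subPow (D N (0 + 2 ^ (k - 1))) 2 ≤ D N (0 + 2 ^ (k - 1)) := subPow_le _ _
      _ ≤ D N c := D_le_D N (by omega)
      _ = ⊥ := hDc
  have h2 : D N (0 + 2 ^ k) ≤ ⊥ := by
    have hmono : 2 ^ (k - 1) ≤ 2 ^ k := Nat.pow_le_pow_right (by norm_num) (by omega)
    calc D N (0 + 2 ^ k) ≤ D N c := D_le_D N (by omega)
      _ = ⊥ := hDc
  have hbot : subPow (D N (0 + 2 ^ (k - 1))) 2 ⊔ D N (0 + 2 ^ k) = ⊥ :=
    le_bot_iff.mp (sup_le h1 h2)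
  rw [hbot] at h
  simpa using h

end PowerfulAux

open PowerfulAux Subgroup in
/-- Let `2^{k-2} ≥ c+1` and `G` a finitely generated nilpotent group of class at most `c`.
With `K = G^{2^k}`, for every normal subgroup `N` of `G` we have `[N,K] ≤ N⁴`;
in particular `K` is powerful: `[K,K] ≤ K⁴`. -/
theorem commutator_with_2k_powers_le_fourth_powers
    (c k : ℕ) (hc : 0 < c) (hk : 0 < k)
    (hck : c + 1 ≤ 2 ^ (k - 2))
    {G : Type*} [Group G] (hfg : Group.FG G)
    (hnil : (⊤ : Subgroup G).lowerCentralSeries c = ⊥)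
    (K : Subgroup G) (hK : K = subPow (⊤ : Subgroup G) (2 ^ k)) :
    (∀ N : Subgroup G, N.Normal → ⁅N, K⁆ ≤ subPow N 4) ∧ ⁅K, K⁆ ≤ subPow K 4 := by
  subst hK
  have part1 : ∀ N : Subgroup G, N.Normal → ⁅N, subPow (⊤ : Subgroup G) (2 ^ k)⁆ ≤ subPow N 4 := by
    intro N hN
    haveI := hN
    haveI hP : (subPow N 4).Normal := subPow_normal N 4
    let S : Subgroup G :=
      { carrier := {g : G | ∀ n ∈ N, ⁅n, g⁆ ∈ subPow N 4}
        one_mem' := fun n hn => by rw [comm_one_right]; exact one_mem _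
        mul_mem' := by
          intro a b ha hb n hn
          rw [id_mul_right]
          exact mul_mem (ha n hn) (hP.conj_mem _ (hb n hn) a)
        inv_mem' := by
          intro a ha n hn
          rw [id_inv_right]
          have := hP.conj_mem _ (inv_mem (ha n hn)) a⁻¹
          rwa [inv_inv] at this }
    have hKS : subPow (⊤ : Subgroup G) (2 ^ k) ≤ S := by
      refine (Subgroup.closure_le S).mpr ?_
      rintro g ⟨x, -, rfl⟩
      intro n hn
      -- pass to the quotient by `subPow N 4`
      have hsurj := QuotientGroup.mk'_surjective (subPow N 4)
      haveI : ((N.map (QuotientGroup.mk' (subPow N 4)))).Normal :=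
        hN.map _ hsurj
      have hexp' : ∀ g ∈ N.map (QuotientGroup.mk' (subPow N 4)), g ^ 4 = 1 := by
        rintro g ⟨m, hm, rfl⟩
        rw [← map_pow]
        have hm4 : m ^ 4 ∈ subPow N 4 := mem_subPow hm
        exact MonoidHom.mem_ker.mp (by rwa [QuotientGroup.ker_mk'])
      have hlcs' : (⊤ : Subgroup (G ⧸ subPow N 4)).lowerCentralSeries c = ⊥ := by
        have hmap : ∀ i, ((⊤ : Subgroup G).lowerCentralSeries i).map (QuotientGroup.mk' (subPow N 4)) =
            (⊤ : Subgroup (G ⧸ subPow N 4)).lowerCentralSeries i := by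
          intro i
          induction i with
          | zero => exact Subgroup.map_top_of_surjective _ hsurj
          | succ i ihh =>
              rw [lcs_succ_comm, lcs_succ_comm,
                Subgroup.map_commutator, ihh, Subgroup.map_top_of_surjective _ hsurj]
        rw [← hmap c, hnil, Subgroup.map_bot]
      have hkk : c ≤ 2 ^ (k - 1) := by
        have h := Nat.pow_le_pow_right (by norm_num : 1 ≤ 2) (by omega : k - 2 ≤ k - 1)
        omega
      have hstar := star (N.map (QuotientGroup.mk' (subPow N 4))) hexp' hlcs'
        (by omega : 1 ≤ k) hkk ((QuotientGroup.mk' (subPow N 4)) n) ⟨n, hn, rfl⟩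
        ((QuotientGroup.mk' (subPow N 4)) x)
      have hone : (QuotientGroup.mk' (subPow N 4)) ⁅n, x ^ 2 ^ k⁆ = 1 := by
        rw [map_commutatorElement, map_pow]
        exact hstar
      have := MonoidHom.mem_ker.mpr hone
      rwa [QuotientGroup.ker_mk'] at this
    exact Subgroup.commutator_le.mpr fun n hn g hg => hKS hg n hn
  haveI hKnormal : (subPow (⊤ : Subgroup G) (2 ^ k)).Normal := subPow_normal ⊤ _
  exact ⟨part1, part1 _ hKnormal⟩
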